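/- For α ∈ (1/2, 1) the principal value PV ∫₀^∞ t^(α−1)/(1−t) dt is strictly negative, and for α ∈ (0, 1/2) it is strictly positive. -/

import Mathlib

open MeasureTheory Filter Real Set

/-- Integrability of `t^β/(1-t)` on `(0,c]` for `c<1`, `β>-1`. -/
lemma pv_aux_integrableOn {β c : ℝ} (hβ : -1 < β) (hc0 : 0 ≤ c) (hc1 : c < 1) :
    IntegrableOn (fun t : ℝ => t ^ β / (1 - t)) (Ioc 0 c) := by
  have hmeas : AEStronglyMeasurable (fun t : ℝ => t ^ β / (1 - t))
      (volume.restrict (Ioc 0 c)) := by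
    apply Measurable.aestronglyMeasurable
    exact (measurable_id.pow_const β).div (measurable_const.sub measurable_id)
  have hint : IntegrableOn (fun t : ℝ => (1 - c)⁻¹ * t ^ β) (Ioc 0 c) := by
    have := (intervalIntegral.intervalIntegrable_rpow' (a := 0) (b := c) hβ)
    rw [intervalIntegrable_iff_integrableOn_Ioc_of_le hc0] at this
    exact this.const_mul _
  refine Integrable.mono' hint hmeas ?_
  filter_upwards [ae_restrict_mem measurableSet_Ioc] with t ht
  have ht0 : 0 < t := ht.1
  have htc : t ≤ c := ht.2
  have h1t : 0 < 1 - t := by linarith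
  have h1c : 0 < 1 - c := by linarith
  rw [Real.norm_eq_abs, abs_div, abs_of_nonneg (Real.rpow_nonneg ht0.le β),
    abs_of_pos h1t]
  rw [div_le_iff₀ h1t]
  have : (1 - c)⁻¹ * t ^ β * (1 - t) = t ^ β * ((1-t) / (1-c)) := by ring
  rw [this]
  have hle : (1:ℝ) ≤ (1 - t) / (1 - c) := by
    rw [le_div_iff₀ h1c]; linarith
  nlinarith [Real.rpow_nonneg ht0.le β]

lemma pv_aux_intervalIntegrable {β c : ℝ} (hβ : -1 < β) (hc0 : 0 ≤ c) (hc1 : c < 1) :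
    IntervalIntegrable (fun t : ℝ => t ^ β / (1 - t)) volume 0 c := by
  rw [intervalIntegrable_iff_integrableOn_Ioc_of_le hc0]
  exact pv_aux_integrableOn hβ hc0 hc1

lemma pv_aux_image {ε : ℝ} (hε : 0 < ε) :
    (fun x : ℝ => x⁻¹) '' (Ioi (1 + ε)) = Ioo 0 (1 + ε)⁻¹ := by
  ext x
  constructor
  · rintro ⟨y, hy, rfl⟩
    simp only [mem_Ioi] at hy
    have hy1 : (0:ℝ) < y := by linarith
    exact ⟨by positivity, inv_strictAnti₀ (by linarith) hy⟩
  · rintro ⟨hx0, hx1⟩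
    refine ⟨x⁻¹, ?_, inv_inv x⟩
    simp only [mem_Ioi]
    calc 1 + ε = ((1+ε)⁻¹)⁻¹ := by rw [inv_inv]
    _ < x⁻¹ := inv_strictAnti₀ hx0 hx1

lemma pv_aux_subst {α ε : ℝ} (hε : 0 < ε) :
    ∫ t in Set.Ioi (1 + ε), t ^ (α - 1) / (1 - t)
      = - ∫ t in Ioo 0 (1+ε)⁻¹, t ^ (-α) / (1 - t) := by
  have hs : MeasurableSet (Ioi (1 + ε)) := measurableSet_Ioi
  have hderiv : ∀ x ∈ Ioi (1 + ε),
      HasDerivWithinAt (fun x : ℝ => x⁻¹) (-(x^2)⁻¹) (Ioi (1 + ε)) x := by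
    intro x hx
    simp only [mem_Ioi] at hx
    have hx0 : x ≠ 0 := by intro h; rw [h] at hx; linarith
    exact (hasDerivAt_inv hx0).hasDerivWithinAt
  have hinj : InjOn (fun x : ℝ => x⁻¹) (Ioi (1 + ε)) := fun a _ b _ hab =>
    inv_injective hab
  have key := MeasureTheory.integral_image_eq_integral_abs_deriv_smul hs hderiv hinj
    (fun t => t ^ (-α) / (1 - t))
  rw [pv_aux_image hε] at key
  rw [key, ← integral_neg]
  apply setIntegral_congr_fun measurableSet_Ioi
  intro x hx
  simp only [mem_Ioi] at hx
  have hx0 : (0:ℝ) < x := by linarith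
  have hx1 : (1:ℝ) < x := by linarith
  have hxα : (x⁻¹) ^ (-α) = x ^ α := by
    rw [Real.inv_rpow hx0.le, Real.rpow_neg hx0.le, inv_inv]
  have hxsub : x ^ (α - 1) = x ^ α / x := by
    rw [Real.rpow_sub hx0, Real.rpow_one]
  show x ^ (α - 1) / (1 - x) = -(|(-(x ^ 2)⁻¹)| • ((x⁻¹) ^ (-α) / (1 - x⁻¹)))
  rw [hxα, hxsub, smul_eq_mul, abs_neg, abs_inv, abs_of_pos (by positivity : (0:ℝ) < x^2)]
  have h1 : (1:ℝ) - x ≠ 0 := by intro h; nlinarith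
  have h2 : (1:ℝ) - x⁻¹ = (x - 1)/x := by field_simp
  have h3 : x - 1 ≠ 0 := by intro h; nlinarith
  rw [h2, div_div_eq_mul_div, div_div, inv_mul_eq_div, div_div, ← neg_div,
    div_eq_div_iff (mul_ne_zero hx0.ne' h1) (mul_ne_zero h3 (by positivity))]
  ring

/-- For `α ∈ (1/2,1)` the principal value `PV ∫₀^∞ t^(α−1)/(1−t) dt` is strictly
negative, while for `α ∈ (0,1/2)` it is strictly positive. -/
theorem pv_integral_sign (α : ℝ) (hα : α ∈ Set.Ioo (0:ℝ) 1) (L : ℝ)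
    (hL : Tendsto
      (fun ε : ℝ =>
        (∫ t in (0:ℝ)..(1 - ε), t ^ (α - 1) / (1 - t)) +
        ∫ t in Set.Ioi (1 + ε), t ^ (α - 1) / (1 - t))
      (nhdsWithin 0 (Set.Ioi 0)) (nhds L)) :
    (α ∈ Set.Ioo (1/2 : ℝ) 1 → L < 0) ∧ (α ∈ Set.Ioo (0:ℝ) (1/2) → 0 < L) := by
  obtain ⟨hα0, hα1⟩ := hα
  have hαm1 : (-1:ℝ) < α - 1 := by linarith
  have hαm2 : (-1:ℝ) < -α := by linarith
  set g : ℝ → ℝ := fun t => t ^ (α - 1) / (1 - t) with hg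
  set h : ℝ → ℝ := fun t => t ^ (-α) / (1 - t) with hh
  set k : ℝ → ℝ := fun t => t ^ (α - 1) / (1 - t) - t ^ (-α) / (1 - t) with hk
  set H : ℝ → ℝ := fun ε => ∫ t in (0:ℝ)..(1 - ε), k t with hH
  set D : ℝ → ℝ := fun ε => ∫ t in (1 - ε)..(1 + ε)⁻¹, h t with hD
  -- basic inequalities for ε ∈ (0, 1/2)
  have hsmall : ∀ ε : ℝ, ε ∈ Ioo (0:ℝ) (1/2) →
      0 < 1 - ε ∧ 1 - ε ≤ (1+ε)⁻¹ ∧ (1+ε)⁻¹ < 1 := by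
    intro ε ⟨hε0, hε2⟩
    refine ⟨by linarith, ?_, ?_⟩
    · have hmul : (1 - ε) * (1 + ε) ≤ 1 := by nlinarith
      calc 1 - ε = (1 - ε) * (1 + ε) * (1 + ε)⁻¹ := by field_simp
      _ ≤ 1 * (1 + ε)⁻¹ := mul_le_mul_of_nonneg_right hmul (by positivity)
      _ = (1 + ε)⁻¹ := one_mul _
    · rw [inv_lt_one_iff₀]; right; linarith
  -- the decomposition F ε = H ε - D ε for small ε
  have hdecomp : ∀ ε : ℝ, ε ∈ Ioo (0:ℝ) (1/2) →
      (∫ t in (0:ℝ)..(1 - ε), t ^ (α - 1) / (1 - t)) +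
        (∫ t in Set.Ioi (1 + ε), t ^ (α - 1) / (1 - t)) = H ε - D ε := by
    intro ε hε
    obtain ⟨h1ε, h2ε, h3ε⟩ := hsmall ε hε
    have hε0 := hε.1
    have hinv0 : (0:ℝ) ≤ (1+ε)⁻¹ := by positivity
    have hig : IntervalIntegrable g volume 0 (1 - ε) :=
      pv_aux_intervalIntegrable hαm1 h1ε.le (by linarith)
    have hih : IntervalIntegrable h volume 0 (1+ε)⁻¹ :=
      pv_aux_intervalIntegrable hαm2 hinv0 h3ε
    have hih1 : IntervalIntegrable h volume 0 (1 - ε) :=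
      hih.mono_set (by rw [uIcc_of_le h1ε.le, uIcc_of_le hinv0]; exact Icc_subset_Icc le_rfl h2ε)
    have hih2 : IntervalIntegrable h volume (1 - ε) (1+ε)⁻¹ :=
      hih.mono_set (by
        rw [uIcc_of_le h2ε, uIcc_of_le hinv0]; exact Icc_subset_Icc h1ε.le le_rfl)
    have htail : (∫ t in Set.Ioi (1 + ε), t ^ (α - 1) / (1 - t))
        = - ∫ t in (0:ℝ)..(1+ε)⁻¹, h t := by
      rw [pv_aux_subst hε0, intervalIntegral.integral_of_le hinv0,
        MeasureTheory.integral_Ioc_eq_integral_Ioo]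
    have hsplit : (∫ t in (0:ℝ)..(1+ε)⁻¹, h t)
        = (∫ t in (0:ℝ)..(1 - ε), h t) + ∫ t in (1 - ε)..(1+ε)⁻¹, h t :=
      (intervalIntegral.integral_add_adjacent_intervals hih1 hih2).symm
    have hHsub : H ε = (∫ t in (0:ℝ)..(1 - ε), g t) - ∫ t in (0:ℝ)..(1 - ε), h t := by
      rw [hH]
      exact intervalIntegral.integral_sub hig hih1
    rw [htail, hsplit, hHsub, hD]
    show (∫ t in (0:ℝ)..(1 - ε), g t) + _ = _
    ring
  -- D tends to 0
  have hDlim : Tendsto D (nhdsWithin 0 (Set.Ioi 0)) (nhds 0) := by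
    refine squeeze_zero_norm' (a := fun ε : ℝ => 4 * ε) ?_ ?_
    · filter_upwards [Ioo_mem_nhdsGT_of_mem (by norm_num : (0:ℝ) ∈ Ico (0:ℝ) (1/2))]
        with ε hε
      obtain ⟨h1ε, h2ε, h3ε⟩ := hsmall ε hε
      have hε0 := hε.1
      have hε2 := hε.2
      have hbound : ∀ t ∈ Set.uIoc (1 - ε) ((1+ε)⁻¹), ‖h t‖ ≤ 4 / ε := by
        intro t ht
        rw [uIoc_of_le h2ε] at ht
        obtain ⟨ht1, ht2⟩ := ht
        have ht0 : (0:ℝ) < t := by linarith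
        have htlt : t < 1 := lt_of_le_of_lt ht2 h3ε
        have h1t : 0 < 1 - t := by linarith
        have hnum : t ^ (-α) ≤ 2 := by
          calc t ^ (-α) ≤ (1/2 : ℝ) ^ (-α) := by
                apply Real.rpow_le_rpow_of_nonpos (by norm_num) (by linarith) (by linarith)
          _ = 2 ^ α := by
                rw [one_div, Real.inv_rpow (by norm_num), Real.rpow_neg (by norm_num), inv_inv]
          _ ≤ 2 ^ (1:ℝ) := Real.rpow_le_rpow_of_exponent_le (by norm_num) (by linarith)
          _ = 2 := Real.rpow_one 2
        have hden : ε / (1 + ε) ≤ 1 - t := by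
          have : 1 - (1+ε)⁻¹ = ε / (1+ε) := by field_simp; ring
          linarith [this ▸ (by linarith : 1 - (1+ε)⁻¹ ≤ 1 - t)]
        have hden2 : ε / 2 ≤ 1 - t := by
          refine le_trans ?_ hden
          apply div_le_div_of_nonneg_left hε0.le (by linarith) (by linarith)
        rw [Real.norm_eq_abs, hh]
        have hpos : 0 ≤ t ^ (-α) / (1 - t) := by positivity
        rw [abs_of_nonneg hpos, div_le_div_iff₀ h1t hε0]
        nlinarith [Real.rpow_nonneg ht0.le (-α)]
      have := intervalIntegral.norm_integral_le_of_norm_le_const hbound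
      have hlen : |(1+ε)⁻¹ - (1 - ε)| ≤ ε ^ 2 := by
        rw [abs_of_nonneg (by linarith)]
        have heq : (1+ε)⁻¹ - (1 - ε) = ε^2 / (1+ε) := by field_simp; ring
        rw [heq]
        rw [div_le_iff₀ (by linarith)]
        nlinarith
      calc ‖D ε‖ ≤ 4 / ε * |(1+ε)⁻¹ - (1 - ε)| := this
      _ ≤ 4 / ε * ε ^ 2 := by
            apply mul_le_mul_of_nonneg_left hlen (by positivity)
      _ = 4 * ε := by field_simp
    · have h4 : Tendsto (fun ε : ℝ => 4 * ε) (nhds 0) (nhds 0) := by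
        simpa using (tendsto_id (α := ℝ) (x := nhds 0)).const_mul (4:ℝ)
      exact h4.mono_left nhdsWithin_le_nhds
  -- H tends to L
  have hHlim : Tendsto H (nhdsWithin 0 (Set.Ioi 0)) (nhds L) := by
    have heq : ∀ᶠ ε in nhdsWithin 0 (Set.Ioi 0),
        ((∫ t in (0:ℝ)..(1 - ε), t ^ (α - 1) / (1 - t)) +
          ∫ t in Set.Ioi (1 + ε), t ^ (α - 1) / (1 - t)) + D ε = H ε := by
      filter_upwards [Ioo_mem_nhdsGT_of_mem (by norm_num : (0:ℝ) ∈ Ico (0:ℝ) (1/2))]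
        with ε hε
      rw [hdecomp ε hε]; ring
    have := (hL.add hDlim).congr' heq
    simpa using this
  -- integrability of k on 0..c for c < 1
  have hik : ∀ c : ℝ, 0 ≤ c → c < 1 → IntervalIntegrable k volume 0 c := by
    intro c hc0 hc1
    exact (pv_aux_intervalIntegrable hαm1 hc0 hc1).sub (pv_aux_intervalIntegrable hαm2 hc0 hc1)
  have hH12 : H (1/2) = ∫ t in (0:ℝ)..(1/2), k t := by norm_num [hH]
  constructor
  · -- α ∈ (1/2, 1): L < 0
    rintro ⟨hα2, -⟩
    have hkneg : ∀ t ∈ Ioo (0:ℝ) 1, k t < 0 := by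
      intro t ⟨ht0, ht1⟩
      have : t ^ (α - 1) < t ^ (-α) :=
        Real.rpow_lt_rpow_of_exponent_gt ht0 ht1 (by linarith)
      have h1t : 0 < 1 - t := by linarith
      rw [hk]
      show t ^ (α - 1) / (1 - t) - t ^ (-α) / (1 - t) < 0
      rw [sub_neg, div_lt_div_iff_of_pos_right h1t]
      exact this
    have hmono : ∀ᶠ ε in nhdsWithin 0 (Set.Ioi 0), H ε ≤ H (1/2) := by
      filter_upwards [Ioo_mem_nhdsGT_of_mem (by norm_num : (0:ℝ) ∈ Ico (0:ℝ) (1/2))]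
        with ε hε
      obtain ⟨hε0, hε2⟩ := hε
      have h1 : (0:ℝ) ≤ 1/2 := by norm_num
      have h2 : (1:ℝ)/2 ≤ 1 - ε := by linarith
      have h3 : 1 - ε < 1 := by linarith
      have h0e : (0:ℝ) ≤ 1 - ε := by linarith
      have hbig := hik (1 - ε) h0e h3
      have hi1 : IntervalIntegrable k volume 0 (1/2) := by
        apply hbig.mono_set
        rw [uIcc_of_le h1, uIcc_of_le h0e]
        exact Icc_subset_Icc le_rfl h2
      have hi2 : IntervalIntegrable k volume (1/2) (1 - ε) := by
        apply hbig.mono_set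
        rw [uIcc_of_le h2, uIcc_of_le h0e]
        exact Icc_subset_Icc h1 le_rfl
      have hsplit := intervalIntegral.integral_add_adjacent_intervals hi1 hi2
      have hpiece : (∫ t in (1/2 : ℝ)..(1 - ε), k t) ≤ 0 := by
        have hnn : 0 ≤ ∫ t in (1/2 : ℝ)..(1 - ε), -k t := by
          apply intervalIntegral.integral_nonneg h2
          intro u hu
          simp only [neg_nonneg]
          exact (hkneg u ⟨by linarith [hu.1], by linarith [hu.2]⟩).le
        rw [intervalIntegral.integral_neg] at hnn
        linarith
      rw [hH12]
      show (∫ t in (0:ℝ)..(1 - ε), k t) ≤ ∫ t in (0:ℝ)..(1/2), k t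
      rw [← hsplit]
      linarith
    have hL12 : L ≤ H (1/2) :=
      le_of_tendsto hHlim hmono
    have hneg : H (1/2) < 0 := by
      rw [hH12]
      have := intervalIntegral.intervalIntegral_pos_of_pos_on
        (f := fun t => -k t) ((hik (1/2) (by norm_num) (by norm_num)).neg)
        (fun x hx => by
          simp only [neg_pos]
          exact hkneg x ⟨hx.1, by linarith [hx.2]⟩)
        (by norm_num)
      rw [intervalIntegral.integral_neg] at this
      linarith
    linarith
  · -- α ∈ (0, 1/2): 0 < L
    rintro ⟨-, hα2⟩
    have hkpos : ∀ t ∈ Ioo (0:ℝ) 1, 0 < k t := by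
      intro t ⟨ht0, ht1⟩
      have : t ^ (-α) < t ^ (α - 1) :=
        Real.rpow_lt_rpow_of_exponent_gt ht0 ht1 (by linarith)
      have h1t : 0 < 1 - t := by linarith
      rw [hk]
      show 0 < t ^ (α - 1) / (1 - t) - t ^ (-α) / (1 - t)
      rw [sub_pos, div_lt_div_iff_of_pos_right h1t]
      exact this
    have hmono : ∀ᶠ ε in nhdsWithin 0 (Set.Ioi 0), H (1/2) ≤ H ε := by
      filter_upwards [Ioo_mem_nhdsGT_of_mem (by norm_num : (0:ℝ) ∈ Ico (0:ℝ) (1/2))]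
        with ε hε
      obtain ⟨hε0, hε2⟩ := hε
      have h1 : (0:ℝ) ≤ 1/2 := by norm_num
      have h2 : (1:ℝ)/2 ≤ 1 - ε := by linarith
      have h3 : 1 - ε < 1 := by linarith
      have h0e : (0:ℝ) ≤ 1 - ε := by linarith
      have hbig := hik (1 - ε) h0e h3
      have hi1 : IntervalIntegrable k volume 0 (1/2) := by
        apply hbig.mono_set
        rw [uIcc_of_le h1, uIcc_of_le h0e]
        exact Icc_subset_Icc le_rfl h2
      have hi2 : IntervalIntegrable k volume (1/2) (1 - ε) := by
        apply hbig.mono_set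
        rw [uIcc_of_le h2, uIcc_of_le h0e]
        exact Icc_subset_Icc h1 le_rfl
      have hsplit := intervalIntegral.integral_add_adjacent_intervals hi1 hi2
      have hpiece : 0 ≤ ∫ t in (1/2 : ℝ)..(1 - ε), k t := by
        apply intervalIntegral.integral_nonneg h2
        intro u hu
        exact (hkpos u ⟨by linarith [hu.1], by linarith [hu.2]⟩).le
      rw [hH12]
      show (∫ t in (0:ℝ)..(1/2), k t) ≤ ∫ t in (0:ℝ)..(1 - ε), k t
      rw [← hsplit]
      linarith
    have hL12 : H (1/2) ≤ L :=
      ge_of_tendsto hHlim hmono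
    have hpos : 0 < H (1/2) := by
      rw [hH12]
      exact intervalIntegral.intervalIntegral_pos_of_pos_on
        (hik (1/2) (by norm_num) (by norm_num))
        (fun x hx => hkpos x ⟨hx.1, by linarith [hx.2]⟩)
        (by norm_num)
    linarith
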